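/- Suppose n is a ℚ-practical natural number and p is a prime not dividing n. Then: (1) p·n is ℚ-practical if and only if p ≤ n + 2; and (2) for every integer k ≥ 2, p^k·n is ℚ-practical if and only if p ≤ n + 1. -/

import Mathlib

open Polynomial Finset

/-- A natural number `n ≥ 1` is `ℚ`-practical if for every `m` with `0 ≤ m ≤ n`,
the polynomial `X^n - 1` has a monic divisor of degree `m` in `ℚ[X]`. -/
def QPractical (n : ℕ) : Prop :=
  1 ≤ n ∧ ∀ m : ℕ, m ≤ n → ∃ d : Polynomial ℚ, d.Monic ∧
    d ∣ (Polynomial.X ^ n - 1) ∧ d.natDegree = m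


lemma monic_dvd_prod_subset : ∀ (s : Finset ℕ) (f : ℕ → Polynomial ℚ),
    (∀ j ∈ s, (f j).Monic) → (∀ j ∈ s, Irreducible (f j)) →
    ∀ d : Polynomial ℚ, d.Monic → d ∣ ∏ j ∈ s, f j → ∃ t ⊆ s, d = ∏ j ∈ t, f j := by
  classical
  intro s
  induction s using Finset.induction_on with
  | empty =>
    intro f _ _ d hd hdvd
    simp only [Finset.prod_empty] at hdvd
    exact ⟨∅, Finset.Subset.refl _, by
      simpa using hd.eq_one_of_isUnit (isUnit_of_dvd_one hdvd)⟩
  | insert _ _ ha ih =>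
    rename_i a s
    intro f hmon hirr d hd hdvd
    rw [Finset.prod_insert ha] at hdvd
    have hmfa : (f a).Monic := hmon a (mem_insert_self a s)
    by_cases hfa : f a ∣ d
    · obtain ⟨d', rfl⟩ := hfa
      have hd' : d'.Monic := hmfa.of_mul_monic_left hd
      have hdvd' : d' ∣ ∏ j ∈ s, f j :=
        (mul_dvd_mul_iff_left hmfa.ne_zero).mp hdvd
      obtain ⟨t, hts, rfl⟩ := ih f (fun j hj => hmon j (mem_insert_of_mem hj))
        (fun j hj => hirr j (mem_insert_of_mem hj)) d' hd' hdvd'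
      refine ⟨insert a t, Finset.insert_subset_insert a hts, ?_⟩
      rw [Finset.prod_insert (fun h => ha (hts h))]
    · have hprime : Prime (f a) := (hirr a (mem_insert_self a s)).prime
      have hco : IsCoprime d (f a) :=
        (hprime.coprime_iff_not_dvd.mpr hfa).symm
      have : d ∣ ∏ j ∈ s, f j := hco.dvd_of_dvd_mul_left hdvd
      obtain ⟨t, hts, rfl⟩ := ih f (fun j hj => hmon j (mem_insert_of_mem hj))
        (fun j hj => hirr j (mem_insert_of_mem hj)) d hd this
      exact ⟨t, hts.trans (Finset.subset_insert a s), rfl⟩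

def Ach (N m : ℕ) : Prop := ∃ t ⊆ N.divisors, ∑ j ∈ t, j.totient = m

lemma ach_le {N m : ℕ} (h : Ach N m) : m ≤ N := by
  obtain ⟨t, ht, rfl⟩ := h
  calc ∑ j ∈ t, j.totient ≤ ∑ j ∈ N.divisors, j.totient :=
        Finset.sum_le_sum_of_subset ht
    _ = N := Nat.sum_totient N

lemma dvd_iff_ach (N : ℕ) (hN : 0 < N) (m : ℕ) :
    (∃ d : Polynomial ℚ, d.Monic ∧ d ∣ (Polynomial.X ^ N - 1) ∧ d.natDegree = m) ↔ Ach N m := by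
  constructor
  · rintro ⟨d, hd, hdvd, rfl⟩
    rw [← prod_cyclotomic_eq_X_pow_sub_one hN ℚ] at hdvd
    obtain ⟨t, hts, rfl⟩ := monic_dvd_prod_subset N.divisors _
      (fun j _ => cyclotomic.monic j ℚ)
      (fun j hj => cyclotomic.irreducible_rat (Nat.pos_of_mem_divisors hj)) d hd hdvd
    refine ⟨t, hts, ?_⟩
    rw [natDegree_prod _ _ (fun j _ => (cyclotomic.monic j ℚ).ne_zero)]
    exact (Finset.sum_congr rfl fun j _ => (natDegree_cyclotomic j ℚ)).symm
  · rintro ⟨t, hts, rfl⟩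
    refine ⟨∏ j ∈ t, cyclotomic j ℚ,
      monic_prod_of_monic _ _ (fun j _ => cyclotomic.monic j ℚ), ?_, ?_⟩
    · rw [← prod_cyclotomic_eq_X_pow_sub_one hN ℚ]
      exact Finset.prod_dvd_prod_of_subset t _ _ hts
    · rw [natDegree_prod _ _ (fun j _ => (cyclotomic.monic j ℚ).ne_zero)]
      exact Finset.sum_congr rfl fun j _ => natDegree_cyclotomic j ℚ


variable {p n : ℕ}



lemma divisors_succ (hp : p.Prime) (hpn : ¬ p ∣ n) (hn : 0 < n) (j : ℕ) :
    (p ^ (j + 1) * n).divisors =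
      (p ^ j * n).divisors ∪ (n.divisors).image (fun d => p ^ (j + 1) * d) := by
  have hppos : 0 < p := hp.pos
  ext e
  simp only [Nat.mem_divisors, Finset.mem_union, Finset.mem_image]
  constructor
  · rintro ⟨hdvd, -⟩
    by_cases hcase : p ^ (j + 1) ∣ e
    · right
      obtain ⟨d, rfl⟩ := hcase
      refine ⟨d, ⟨?_, hn.ne'⟩, rfl⟩
      exact (mul_dvd_mul_iff_left (pow_pos hppos (j+1)).ne').mp hdvd
    · left
      have he : e ≠ 0 := by
        rintro rfl
        exact hcase (dvd_zero _)
      set i := e.factorization p with hi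
      have hself : p ^ i * (e / p ^ i) = e := Nat.ordProj_mul_ordCompl_eq_self e p
      have hcnd : ¬ p ∣ (e / p ^ i) := Nat.not_dvd_ordCompl hp he
      have hij : i ≤ j := by
        by_contra hij
        exact hcase (dvd_trans (pow_dvd_pow p (Nat.lt_of_not_le hij)) (Nat.ordProj_dvd e p))
      have hcd : (e / p ^ i) ∣ n := by
        have h1 : (e / p ^ i) ∣ p ^ (j+1) * n := dvd_trans (Nat.ordCompl_dvd e p) hdvd
        have hco : Nat.Coprime (e / p ^ i) (p ^ (j+1)) :=
          (Nat.Coprime.pow_right _ ((hp.coprime_iff_not_dvd.mpr hcnd).symm))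
        exact (Nat.Coprime.dvd_of_dvd_mul_left hco h1)
      refine ⟨?_, by positivity⟩
      calc e = p ^ i * (e / p ^ i) := hself.symm
        _ ∣ p ^ j * n := mul_dvd_mul (pow_dvd_pow p hij) hcd
  · rintro (⟨hdvd, -⟩ | ⟨d, ⟨hd, -⟩, rfl⟩)
    · exact ⟨hdvd.trans (mul_dvd_mul (pow_dvd_pow p j.le_succ) dvd_rfl), by positivity⟩
    · exact ⟨mul_dvd_mul_left _ hd, by positivity⟩

lemma divisors_disj (hp : p.Prime) (hpn : ¬ p ∣ n) (hn : 0 < n) (j : ℕ) :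
    Disjoint ((p ^ j * n).divisors) ((n.divisors).image (fun d => p ^ (j + 1) * d)) := by
  rw [Finset.disjoint_left]
  rintro e he1 he2
  simp only [Finset.mem_image, Nat.mem_divisors] at he1 he2
  obtain ⟨d, ⟨hd, -⟩, rfl⟩ := he2
  have hd0 : 0 < d := Nat.pos_of_dvd_of_pos hd hn
  have h1 : p ^ (j + 1) ∣ p ^ j * n :=
    dvd_trans (Dvd.intro d rfl) he1.1
  rw [pow_succ] at h1
  have : p ∣ n := (mul_dvd_mul_iff_left (pow_pos hp.pos j).ne').mp h1
  exact hpn this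




lemma totient_pmul (hp : p.Prime) (hpn : ¬ p ∣ n) (j : ℕ) {d : ℕ} (hd : d ∣ n) :
    (p ^ (j + 1) * d).totient = p ^ j * (p - 1) * d.totient := by
  have hpd : ¬ p ∣ d := fun h => hpn (h.trans hd)
  have hco : Nat.Coprime (p ^ (j + 1)) d :=
    Nat.Coprime.pow_left _ (hp.coprime_iff_not_dvd.mpr hpd)
  rw [Nat.totient_mul hco, Nat.totient_prime_pow hp (Nat.succ_pos j)]
  simp

lemma ach_succ_iff (hp : p.Prime) (hpn : ¬ p ∣ n) (hn : 0 < n) (j m : ℕ) :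
    Ach (p ^ (j + 1) * n) m ↔
      ∃ a b, Ach (p ^ j * n) a ∧ Ach n b ∧ m = a + p ^ j * (p - 1) * b := by
  classical
  have hinj : ∀ x ∈ n.divisors, ∀ y ∈ n.divisors,
      p ^ (j+1) * x = p ^ (j+1) * y → x = y := fun x _ y _ h =>
    Nat.eq_of_mul_eq_mul_left (pow_pos hp.pos _) h
  constructor
  · rintro ⟨t, hts, rfl⟩
    rw [divisors_succ hp hpn hn j] at hts
    set D1 := (p ^ j * n).divisors with hD1
    set D2 := (n.divisors).image (fun d => p ^ (j + 1) * d) with hD2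
    have ht : t = (t ∩ D1) ∪ (t ∩ D2) := by
      rw [← Finset.inter_union_distrib_left]
      exact (Finset.inter_eq_left.mpr hts).symm
    have hdisj : Disjoint (t ∩ D1) (t ∩ D2) :=
      (divisors_disj hp hpn hn j).mono inter_subset_right inter_subset_right
    obtain ⟨s2, hs2, ht2⟩ := Finset.subset_image_iff.mp
      (Finset.inter_subset_right : t ∩ D2 ⊆ D2)
    refine ⟨∑ j ∈ t ∩ D1, j.totient, ∑ d ∈ s2, d.totient,
      ⟨t ∩ D1, Finset.inter_subset_right, rfl⟩, ⟨s2, hs2, rfl⟩, ?_⟩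
    have hsum : ∑ i ∈ t, i.totient
        = ∑ i ∈ t ∩ D1, i.totient + ∑ i ∈ t ∩ D2, i.totient := by
      rw [← Finset.sum_union hdisj, ← ht]
    have hsum2 : ∑ i ∈ t ∩ D2, i.totient = p ^ j * (p - 1) * ∑ d ∈ s2, d.totient := by
      rw [← ht2, Finset.sum_image (fun x hx y hy h => hinj x (hs2 hx) y (hs2 hy) h),
        Finset.mul_sum]
      exact Finset.sum_congr rfl fun d hd =>
        totient_pmul hp hpn j (Nat.dvd_of_mem_divisors (hs2 hd))
    rw [hsum, hsum2]
  · rintro ⟨a, b, ⟨t1, ht1, rfl⟩, ⟨s2, hs2, rfl⟩, rfl⟩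
    refine ⟨t1 ∪ (s2.image (fun d => p ^ (j + 1) * d)), ?_, ?_⟩
    · rw [divisors_succ hp hpn hn j]
      exact Finset.union_subset_union ht1 (Finset.image_subset_image hs2)
    · have hdisj : Disjoint t1 (s2.image (fun d => p ^ (j + 1) * d)) :=
        (divisors_disj hp hpn hn j).mono ht1
          ((Finset.image_subset_image hs2).trans (le_refl _))
      rw [Finset.sum_union hdisj, Finset.sum_image
        (fun x hx y hy h => hinj x (hs2 hx) y (hs2 hy) h)]
      congr 1
      rw [Finset.mul_sum]
      exact Finset.sum_congr rfl fun d hd =>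
        totient_pmul hp hpn j (Nat.dvd_of_mem_divisors (hs2 hd))

lemma qpractical_iff (N : ℕ) (hN : 0 < N) : QPractical N ↔ ∀ m ≤ N, Ach N m := by
  constructor
  · rintro ⟨-, h⟩ m hm
    exact (dvd_iff_ach N hN m).mp (h m hm)
  · intro h
    exact ⟨hN, fun m hm => (dvd_iff_ach N hN m).mpr (h m hm)⟩

lemma ach_step {p n : ℕ} (hp : p.Prime) (hpn : ¬ p ∣ n) (hn : 0 < n) (j : ℕ)
    (hcov : ∀ m ≤ p ^ j * n, Ach (p ^ j * n) m) (hcovn : ∀ m ≤ n, Ach n m)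
    (hc : p ^ j * (p - 1) ≤ p ^ j * n + 1) :
    ∀ m ≤ p ^ (j + 1) * n, Ach (p ^ (j + 1) * n) m := by
  intro m hm
  set c := p ^ j * (p - 1) with hcdef
  have hp2 := hp.two_le
  have hc0 : 0 < c := by
    have : 0 < p ^ j := pow_pos hp.pos j
    have : 0 < p - 1 := by omega
    positivity
  set b := min n (m / c) with hbdef
  have hb : b ≤ n := min_le_left _ _
  have hcb : c * b ≤ m := by
    calc c * b ≤ c * (m / c) := Nat.mul_le_mul_left c (min_le_right _ _)
      _ ≤ m := Nat.mul_div_le m c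
  obtain ⟨p', rfl⟩ : ∃ p', p = p' + 1 := ⟨p - 1, by omega⟩
  have hkey : c * n + (p' + 1) ^ j * n = (p' + 1) ^ (j + 1) * n := by
    rw [hcdef]
    simp only [Nat.add_sub_cancel]
    ring
  have ha : m - c * b ≤ (p' + 1) ^ j * n := by
    rcases le_or_gt (m / c) n with hmin | hmin
    · have hbeq : b = m / c := min_eq_right hmin
      rw [hbeq]
      have h1 := Nat.div_add_mod m c
      have h2 : m % c < c := Nat.mod_lt _ hc0
      omega
    · have hbeq : b = n := min_eq_left hmin.le
      rw [hbeq]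
      omega
  refine (ach_succ_iff hp hpn hn j m).mpr
    ⟨m - c * b, b, hcov _ ha, hcovn b hb, ?_⟩
  rw [← hcdef]
  omega

lemma ach_inv {p n : ℕ} (hp : p.Prime) (hpn : ¬ p ∣ n) (hn : 0 < n)
    (hnp : n + 2 ≤ p) :
    ∀ j m, Ach (p ^ (j + 1) * n) m → (m / (p - 1)) % p ≤ n := by
  have h1 : 0 < p - 1 := by omega
  intro j
  induction j with
  | zero =>
    intro m hm
    obtain ⟨a, b, ha, hb, rfl⟩ := (ach_succ_iff hp hpn hn 0 m).mp hm
    have ha' : a ≤ n := by simpa using ach_le ha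
    have hb' : b ≤ n := ach_le hb
    rw [pow_zero, one_mul, Nat.add_mul_div_left _ _ h1,
      Nat.div_eq_of_lt (by omega : a < p - 1)]
    rw [Nat.mod_eq_of_lt (by omega : 0 + b < p)]
    omega
  | succ j ih =>
    intro m hm
    obtain ⟨a, b, ha, hb, rfl⟩ := (ach_succ_iff hp hpn hn (j + 1) m).mp hm
    have hrw : p ^ (j + 1) * (p - 1) * b = (p - 1) * (p ^ (j + 1) * b) := by ring
    rw [hrw, Nat.add_mul_div_left _ _ h1]
    have hrw2 : p ^ (j + 1) * b = p * (p ^ j * b) := by ring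
    rw [hrw2, Nat.add_mul_mod_self_left]
    exact ih a ha

theorem QPractical_mul_prime_pow (n p : ℕ) (hn : QPractical n) (hp : p.Prime)
    (hpn : ¬ p ∣ n) :
    (QPractical (p * n) ↔ p ≤ n + 2) ∧
      ∀ k : ℕ, 2 ≤ k → (QPractical (p ^ k * n) ↔ p ≤ n + 1) := by
  have hn0 : 0 < n := hn.1
  have hcovn : ∀ m ≤ n, Ach n m := (qpractical_iff n hn0).mp hn
  have hp2 := hp.two_le
  have hstepgen : ∀ j, p ^ j * (p - 1) ≤ p ^ j * n → ∀ m ≤ p ^ j * n,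
      Ach (p ^ j * n) m → True := fun _ _ _ _ _ => trivial
  constructor
  · constructor
    · intro hpr
      by_contra hle
      push_neg at hle
      have hNpos : 0 < p * n := by positivity
      have hm : Ach (p * n) (n + 1) := by
        refine (qpractical_iff _ hNpos).mp hpr (n + 1) ?_
        calc n + 1 ≤ p := by omega
          _ ≤ p * n := Nat.le_mul_of_pos_right p hn0
      rw [show p * n = p ^ (0 + 1) * n by ring] at hm
      obtain ⟨a, b, ha, hb, habm⟩ := (ach_succ_iff hp hpn hn0 0 _).mp hm
      have ha' : a ≤ n := by simpa using ach_le ha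
      have hb' : b ≤ n := ach_le hb
      rw [pow_zero, one_mul] at habm
      rcases Nat.eq_zero_or_pos b with rfl | hbpos
      · omega
      · have : p - 1 ≤ (p - 1) * b := Nat.le_mul_of_pos_right _ hbpos
        omega
    · intro hle
      rw [qpractical_iff _ (by positivity)]
      intro m hm
      have hstep := ach_step hp hpn hn0 0
        (by simpa using hcovn) hcovn (by simp; omega)
      have := hstep m (by simpa using hm)
      simpa using this
  · intro k hk
    constructor
    · intro hpr
      by_contra hle
      push_neg at hle
      have hnp : n + 2 ≤ p := by omega
      have hNpos : 0 < p ^ k * n := by positivity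
      have hmle : (p - 1) * (p - 1) ≤ p ^ k * n := by
        have h2 : p * p ≤ p ^ k := by
          calc p * p = p ^ 2 := by ring
            _ ≤ p ^ k := Nat.pow_le_pow_right hp.pos hk
        have h3 : p ^ k ≤ p ^ k * n := Nat.le_mul_of_pos_right _ hn0
        have h4 : (p - 1) * (p - 1) ≤ p * p :=
          Nat.mul_le_mul (Nat.sub_le p 1) (Nat.sub_le p 1)
        omega
      have hm : Ach (p ^ k * n) ((p - 1) * (p - 1)) :=
        (qpractical_iff _ hNpos).mp hpr _ hmle
      obtain ⟨j, rfl⟩ : ∃ j, k = j + 1 := ⟨k - 1, by omega⟩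
      have := ach_inv hp hpn hn0 hnp j _ hm
      rw [Nat.mul_div_cancel_left _ (by omega : 0 < p - 1)] at this
      rw [Nat.mod_eq_of_lt (by omega : p - 1 < p)] at this
      omega
    · intro hle
      have main : ∀ j, ∀ m ≤ p ^ j * n, Ach (p ^ j * n) m := by
        intro j
        induction j with
        | zero => simpa using hcovn
        | succ j ih =>
          refine ach_step hp hpn hn0 j ih hcovn ?_
          have : p ^ j * (p - 1) ≤ p ^ j * n :=
            Nat.mul_le_mul_left _ (by omega)
          omega
      rw [qpractical_iff _ (by positivity)]
      exact main k
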